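/- arXiv:0902.0038 — 2 statements merged into one kernel-verified Lean document; each statement's English description precedes it below -/
import Mathlib

section
/- Let K be a field of characteristic zero and L = Der(K[x, x⁻¹]) the two-sided Witt algebra, i.e., the Lie algebra of derivations of the Laurent polynomial algebra, with basis eₙ = x^{n+1} d/dx (n ∈ ℤ) and bracket [eₘ, eₙ] = (n − m) e_{m+n}. Then every invariant symmetric bilinear form on L vanishes identically. -/
open LaurentPolynomial

section Witt

variable (K : Type*) [Field K]

noncomputable def wittL (n : ℤ) : LaurentPolynomial K →ₗ[K] LaurentPolynomial K :=
  (Finsupp.lsum K fun k => LinearMap.toSpanSingleton K _ (k • (T (k + n) : LaurentPolynomial K)))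
    ∘ₗ (AddMonoidAlgebra.coeffLinearEquiv K).toLinearMap

lemma wittL_single (n k : ℤ) (a : K) :
    wittL K n (AddMonoidAlgebra.single k a) = a • (k • (T (k + n) : LaurentPolynomial K)) := by
  rw [wittL]
  exact Finsupp.lsum_single K _ _ _

lemma wittL_C_mul_T (n k : ℤ) (a : K) :
    wittL K n (C a * T k) = a • (k • (T (k + n) : LaurentPolynomial K)) := by
  rw [← single_eq_C_mul_T, wittL_single]

lemma wittL_T (n k : ℤ) : wittL K n (T k) = k • (T (k + n) : LaurentPolynomial K) := by
  have h : (T k : LaurentPolynomial K) = C 1 * T k := by simp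
  rw [h, wittL_C_mul_T, one_smul]

noncomputable def wittE (n : ℤ) : Derivation K (LaurentPolynomial K) (LaurentPolynomial K) where
  toLinearMap := wittL K n
  map_one_eq_zero' := by
    have : (1 : LaurentPolynomial K) = C 1 * T 0 := by simp
    rw [this, wittL_C_mul_T]; simp
  leibniz' := by
    intro p q
    induction p using LaurentPolynomial.induction_on' with
    | add f g hf hg =>
      simp only [map_add, add_mul, hf, hg, add_smul, smul_add]
      abel
    | C_mul_T m a =>
      induction q using LaurentPolynomial.induction_on' with
      | add f g hf hg =>
        simp only [map_add, mul_add, hf, hg, add_smul, smul_add]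
        abel
      | C_mul_T k b =>
        have h1 : (C a * T m) * (C b * T k) = C (a * b) * T (m + k) := by
          simp only [← single_eq_C_mul_T]
          exact AddMonoidAlgebra.single_mul_single _ _ _ _
        rw [h1, wittL_C_mul_T, wittL_C_mul_T, wittL_C_mul_T]
        have e1 : (T (m + k + n) : LaurentPolynomial K) = T m * T k * T n := by
          rw [T_add, T_add]
        have e2 : (T (k + n) : LaurentPolynomial K) = T k * T n := T_add k n
        have e3 : (T (m + n) : LaurentPolynomial K) = T m * T n := T_add m n
        rw [e1, e2, e3]
        simp only [zsmul_eq_mul, smul_eq_mul, Algebra.smul_def, ← C_eq_algebraMap, map_mul]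
        push_cast
        ring

lemma wittE_apply_T (n k : ℤ) :
    wittE K n (T k) = k • (T (k + n) : LaurentPolynomial K) := wittL_T K n k

lemma adjoin_T_pair : Algebra.adjoin K ({T 1, T (-1)} : Set (LaurentPolynomial K)) = ⊤ := by
  rw [eq_top_iff]
  rintro p -
  induction p using LaurentPolynomial.induction_on' with
  | add f g hf hg => exact add_mem hf hg
  | C_mul_T n a =>
    refine mul_mem ?_ ?_
    · exact Subalgebra.algebraMap_mem _ a
    rcases le_or_gt 0 n with hn | hn
    · have : (T n : LaurentPolynomial K) = (T 1) ^ n.toNat := by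
        rw [T_pow]; congr 1; omega
      rw [this]
      exact pow_mem (Algebra.subset_adjoin (by simp)) _
    · have : (T n : LaurentPolynomial K) = (T (-1)) ^ (-n).toNat := by
        rw [T_pow]; congr 1; omega
      rw [this]
      exact pow_mem (Algebra.subset_adjoin (by simp)) _

lemma deriv_T_neg_one (d : Derivation K (LaurentPolynomial K) (LaurentPolynomial K)) :
    d (T (-1)) = -(T (-2) * d (T 1)) := by
  have h0 : (T 1 : LaurentPolynomial K) * T (-1) = 1 := by rw [← T_add]; norm_num
  have h := d.leibniz (T 1) (T (-1))
  rw [h0, d.map_one_eq_zero] at h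
  have h2 : (T 1 : LaurentPolynomial K) • d (T (-1)) = -((T (-1) : LaurentPolynomial K) • d (T 1)) :=
    eq_neg_of_add_eq_zero_left h.symm
  rw [smul_eq_mul, smul_eq_mul] at h2
  have h3 : (T (-1) : LaurentPolynomial K) * (T 1 * d (T (-1))) = d (T (-1)) := by
    rw [← mul_assoc, ← T_add]; norm_num
  calc d (T (-1)) = T (-1) * (T 1 * d (T (-1))) := h3.symm
    _ = T (-1) * -(T (-1) * d (T 1)) := by rw [h2]
    _ = -(T (-2) * d (T 1)) := by rw [mul_neg, ← mul_assoc, ← T_add]; norm_num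

lemma deriv_ext_T1 {d1 d2 : Derivation K (LaurentPolynomial K) (LaurentPolynomial K)}
    (h : d1 (T 1) = d2 (T 1)) : d1 = d2 := by
  refine Derivation.ext_of_adjoin_eq_top _ (adjoin_T_pair K) ?_
  rintro x (rfl | rfl)
  · exact h
  · rw [deriv_T_neg_one, deriv_T_neg_one, h]

lemma wittE_bracket (m n : ℤ) :
    ⁅wittE K m, wittE K n⁆ = ((n - m : ℤ) : K) • wittE K (m + n) := by
  apply deriv_ext_T1
  rw [Derivation.commutator_apply]
  rw [wittE_apply_T, map_zsmul, wittE_apply_T, wittE_apply_T, map_zsmul, wittE_apply_T]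
  rw [Derivation.smul_apply, wittE_apply_T]
  have e1 : (1 : ℤ) + n + m = 1 + (m + n) := by ring
  have e2 : (1 : ℤ) + m + n = 1 + (m + n) := by ring
  rw [e1, e2]
  rw [smul_smul, smul_smul, ← sub_smul, Int.cast_smul_eq_zsmul, one_zsmul]
  congr 1
  ring

noncomputable def evT1 :
    Derivation K (LaurentPolynomial K) (LaurentPolynomial K) →ₗ[K] LaurentPolynomial K where
  toFun d := d (T 1)
  map_add' _ _ := rfl
  map_smul' _ _ := rfl

lemma mem_span_wittE (d : Derivation K (LaurentPolynomial K) (LaurentPolynomial K)) :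
    d ∈ Submodule.span K (Set.range (wittE K)) := by
  have hd : d = (d (T 1)).coeff.sum fun k c => c • wittE K (k - 1) := by
    apply deriv_ext_T1
    have : (((d (T 1)).coeff.sum fun k c => c • wittE K (k - 1)) : Derivation K _ _) (T 1)
        = evT1 K ((d (T 1)).coeff.sum fun k c => c • wittE K (k - 1)) := rfl
    rw [this, map_finsuppSum]
    have h2 : ∀ (k : ℤ) (c : K), evT1 K (c • wittE K (k - 1)) = AddMonoidAlgebra.single k c := by
      intro k c
      show c • (wittE K (k - 1) (T 1)) = _
      rw [wittE_apply_T]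
      have : (1 : ℤ) + (k - 1) = k := by ring
      rw [this, one_zsmul, single_eq_C_mul_T, Algebra.smul_def, ← C_eq_algebraMap]
    rw [Finsupp.sum_congr (fun k _ => h2 k _)]
    exact ((AddMonoidAlgebra.ofCoeff_finsuppSum _ (fun (k : ℤ) (c : K) => Finsupp.single k c)).symm.trans
      (congrArg AddMonoidAlgebra.ofCoeff (Finsupp.sum_single _))).symm
  rw [hd]
  exact Submodule.sum_mem _ fun k _ =>
    Submodule.smul_mem _ _ (Submodule.subset_span ⟨k - 1, rfl⟩)

end Witt

/-- Every invariant symmetric bilinear form on the two-sided Witt algebra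
`Der(K[x,x⁻¹])` (the Lie algebra of derivations of the Laurent polynomial algebra)
over a field of characteristic zero vanishes identically. -/
theorem invariant_forms_vanish_on_two_sided_Witt
    (K : Type*) [Field K] [CharZero K]
    (ω : Derivation K (LaurentPolynomial K) (LaurentPolynomial K) →ₗ[K]
         Derivation K (LaurentPolynomial K) (LaurentPolynomial K) →ₗ[K] K)
    (hsym : ∀ x y : Derivation K (LaurentPolynomial K) (LaurentPolynomial K),
      ω x y = ω y x)
    (hinv : ∀ x y z : Derivation K (LaurentPolynomial K) (LaurentPolynomial K),
      ω ⁅z, x⁆ y + ω x ⁅z, y⁆ = 0) :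
    ω = 0 := by
  set E : ℤ → Derivation K (LaurentPolynomial K) (LaurentPolynomial K) := wittE K with hE
  -- ω vanishes when the indices do not sum to zero
  have h1 : ∀ m n : ℤ, m + n ≠ 0 → ω (E m) (E n) = 0 := by
    intro m n hmn
    have h := hinv (E m) (E n) (E 0)
    rw [hE, wittE_bracket, wittE_bracket] at h
    rw [map_smul, map_smul, LinearMap.smul_apply] at h
    rw [zero_add, zero_add, smul_eq_mul, smul_eq_mul] at h
    have h' : ((m : K) + (n : K)) * ω (E m) (E n) = 0 := by
      push_cast at h; linear_combination h
    have hcast : ((m : K) + (n : K)) ≠ 0 := by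
      have : ((m + n : ℤ) : K) ≠ 0 := Int.cast_ne_zero.mpr hmn
      push_cast at this; exact this
    exact (mul_eq_zero.mp h').resolve_left hcast
  -- ω vanishes on opposite-index pairs (nonzero index)
  have h2 : ∀ m : ℤ, m ≠ 0 → ω (E m) (E (-m)) = 0 := by
    intro m hm
    have h := hinv (E (-m)) (E (-m)) (E (2 * m))
    have hb : ⁅E (2 * m), E (-m)⁆ = ((-3 * m : ℤ) : K) • E m := by
      rw [hE, wittE_bracket]
      have h3 : (2 : ℤ) * m + -m = m := by ring
      have h4 : (-m - 2 * m : ℤ) = -3 * m := by ring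
      rw [h3, h4]
    rw [hb, map_smul, LinearMap.smul_apply, map_smul,
      hsym (E (-m)) (E m), smul_eq_mul] at h
    have h' : ((-3 * m : ℤ) : K) * (2 * ω (E m) (E (-m))) = 0 := by
      linear_combination h
    have hc : ((-3 * m : ℤ) : K) ≠ 0 := Int.cast_ne_zero.mpr (by omega)
    have h'' := (mul_eq_zero.mp h').resolve_left hc
    exact (mul_eq_zero.mp h'').resolve_left two_ne_zero
  -- the remaining diagonal case
  have h3 : ω (E 0) (E 0) = 0 := by
    have h := hinv (E 0) (E 1) (E (-1))
    have hb1 : ⁅E (-1), E 0⁆ = ((1 : ℤ) : K) • E (-1) := by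
      rw [hE, wittE_bracket]; norm_num
    have hb2 : ⁅E (-1), E 1⁆ = ((2 : ℤ) : K) • E 0 := by
      rw [hE, wittE_bracket]; norm_num
    rw [hb1, hb2, map_smul, LinearMap.smul_apply, map_smul] at h
    have hz : ω (E (-1)) (E 1) = 0 := by simpa using h2 (-1) (by norm_num)
    rw [hz] at h
    have h' : (2 : K) * ω (E 0) (E 0) = 0 := by
      rw [smul_eq_mul, smul_eq_mul] at h
      push_cast at h
      linear_combination h
    exact (mul_eq_zero.mp h').resolve_left two_ne_zero
  have hall : ∀ m n : ℤ, ω (E m) (E n) = 0 := by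
    intro m n
    by_cases hmn : m + n = 0
    · rcases eq_or_ne m 0 with rfl | hm
      · have : n = 0 := by omega
        subst this; exact h3
      · have : n = -m := by omega
        subst this; exact h2 m hm
    · exact h1 m n hmn
  have key : ∀ x ∈ Submodule.span K (Set.range (wittE K)),
      ∀ y ∈ Submodule.span K (Set.range (wittE K)), ω x y = 0 := by
    intro x hx
    induction hx using Submodule.span_induction with
    | mem x hxm =>
      obtain ⟨m, rfl⟩ := hxm
      intro y hy
      induction hy using Submodule.span_induction with
      | mem y hym => obtain ⟨n, rfl⟩ := hym; exact hall m n
      | zero => simp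
      | add a b _ _ ha hb => simp [ha, hb]
      | smul c a _ ha => simp [ha]
    | zero => intro y hy; simp
    | add a b _ _ ha hb => intro y hy; simp [ha y hy, hb y hy]
    | smul c a _ ha => intro y hy; simp [ha y hy]
  refine LinearMap.ext fun x => LinearMap.ext fun y => ?_
  simpa using key x (mem_span_wittE K x) y (mem_span_wittE K y)
end

section
/- Let K be a field of characteristic p > 3 and let W₁(1) = Der(K[x]/(x^p)) be the Witt algebra, with basis eᵢ = x^{i+1} d/dx for i = −1, 0, 1, …, p−2 and bracket [eᵢ, eⱼ] = (j − i)e_{i+j} (where e_k = 0 for k outside the range). Then every invariant symmetric bilinear form on W₁(1) vanishes. -/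
set_option synthInstance.maxHeartbeats 1000000
set_option maxHeartbeats 1000000
open Polynomial

/-- The truncated polynomial algebra `K[x]/(x^p)`. -/
abbrev TruncPoly (K : Type*) [Field K] (p : ℕ) :=
  Polynomial K ⧸ Ideal.span {(X : Polynomial K) ^ p}

section Witt

variable (K : Type*) [Field K] (p : ℕ) [CharP K p]

local notation "π" => Ideal.Quotient.mk (Ideal.span {(X : Polynomial K) ^ p})

noncomputable def Wt : TruncPoly K p := π X

lemma Witt_deriv_mem {g : Polynomial K} (hg : g ∈ Ideal.span {(X : Polynomial K) ^ p}) :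
    derivative g ∈ Ideal.span {(X : Polynomial K) ^ p} := by
  rw [Ideal.mem_span_singleton] at hg ⊢
  obtain ⟨h, rfl⟩ := hg
  rw [derivative_mul, derivative_X_pow]
  have : ((p : K)) = 0 := CharP.cast_eq_zero K p
  simp [this]

noncomputable def wder : TruncPoly K p →ₗ[K] TruncPoly K p :=
  (Submodule.Quotient.restrictScalarsEquiv K (Ideal.span {(X : Polynomial K) ^ p})).toLinearMap
    ∘ₗ (Submodule.mapQ _ _ (derivative (R := K))
        (fun g hg => Witt_deriv_mem K p hg))
    ∘ₗ (Submodule.Quotient.restrictScalarsEquiv K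
        (Ideal.span {(X : Polynomial K) ^ p})).symm.toLinearMap

lemma wder_mk (g : Polynomial K) : wder K p (π g) = π (derivative g) := by
  have h1 : (π g : TruncPoly K p) =
      Submodule.Quotient.restrictScalarsEquiv K (Ideal.span {(X : Polynomial K) ^ p})
        (Submodule.Quotient.mk g) := by
    rw [Submodule.Quotient.restrictScalarsEquiv_mk]; rfl
  rw [wder, LinearMap.comp_apply, LinearMap.comp_apply, LinearEquiv.coe_toLinearMap,
    LinearEquiv.coe_toLinearMap, h1, LinearEquiv.symm_apply_apply]
  rfl

end Witt

section Witt2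
variable (K : Type*) [Field K] (p : ℕ) [CharP K p]
local notation "π" => Ideal.Quotient.mk (Ideal.span {(X : Polynomial K) ^ p})

noncomputable def WE : Derivation K (TruncPoly K p) (TruncPoly K p) where
  toLinearMap := wder K p
  map_one_eq_zero' := by
    have : (1 : TruncPoly K p) = π 1 := rfl
    rw [this, wder_mk]; simp
  leibniz' := by
    intro a b
    obtain ⟨g, rfl⟩ := Ideal.Quotient.mk_surjective a
    obtain ⟨h, rfl⟩ := Ideal.Quotient.mk_surjective b
    show wder K p (π g * π h) = _
    rw [← map_mul, wder_mk, derivative_mul, map_add, map_mul, map_mul]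
    show _ = π g • wder K p (π h) + π h • wder K p (π g)
    rw [wder_mk, wder_mk, smul_eq_mul, smul_eq_mul]
    ring

/-- the derivation f·d/dx -/
noncomputable def WD (f : TruncPoly K p) : Derivation K (TruncPoly K p) (TruncPoly K p) :=
  f • WE K p

lemma WD_apply (f x : TruncPoly K p) : WD K p f x = f * wder K p x := rfl

lemma WE_t : WE K p (Wt K p) = 1 := by
  show wder K p (π X) = 1
  rw [wder_mk]; simp

lemma Wt_pow (n : ℕ) : (Wt K p) ^ n = π (X ^ n) := by
  rw [Wt, map_pow]

lemma pi_C (c : K) : (π (C c) : TruncPoly K p) = algebraMap K (TruncPoly K p) c := by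
  rw [← Polynomial.algebraMap_eq]
  exact (IsScalarTower.algebraMap_apply K (Polynomial K) (TruncPoly K p) _).symm

lemma wder_t_pow (n : ℕ) :
    wder K p ((Wt K p) ^ n) = (n : K) • (Wt K p) ^ (n - 1) := by
  rw [Wt_pow, wder_mk, derivative_X_pow, map_mul, Wt_pow, pi_C, ← Algebra.smul_def]


lemma WD_ext {D₁ D₂ : Derivation K (TruncPoly K p) (TruncPoly K p)}
    (h : D₁ (Wt K p) = D₂ (Wt K p)) : D₁ = D₂ := by
  ext a
  obtain ⟨g, rfl⟩ := Ideal.Quotient.mk_surjective a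
  induction g using Polynomial.induction_on with
  | C a =>
      rw [pi_C, Derivation.map_algebraMap, Derivation.map_algebraMap]
  | add f g hf hg => rw [map_add, map_add, map_add, hf, hg]
  | monomial n a ih =>
      have : (π (C a * X ^ (n+1)) : TruncPoly K p) = π (C a * X ^ n) * Wt K p := by
        rw [pow_succ, ← mul_assoc, map_mul]; rfl
      rw [this, Derivation.leibniz, Derivation.leibniz, ih, h]

end Witt2

section Witt3
variable (K : Type*) [Field K] (p : ℕ) [CharP K p]
local notation "π" => Ideal.Quotient.mk (Ideal.span {(X : Polynomial K) ^ p})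
local notation "t" => Wt K p

lemma wder_t : wder K p t = 1 := WE_t K p

lemma commutator_apply (D₁ D₂ : Derivation K (TruncPoly K p) (TruncPoly K p))
    (x : TruncPoly K p) : ⁅D₁, D₂⁆ x = D₁ (D₂ x) - D₂ (D₁ x) := rfl

lemma WD_bracket (k a : ℕ) :
    ⁅WD K p (t ^ k), WD K p (t ^ a)⁆
      = ((a : K) - (k : K)) • WD K p (t ^ (a + k - 1)) := by
  apply WD_ext
  rw [commutator_apply, Derivation.smul_apply]
  rw [WD_apply, WD_apply, WD_apply, WD_apply, WD_apply, wder_t, mul_one, mul_one,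
    wder_t_pow, wder_t_pow]
  rcases a with _ | m <;> rcases k with _ | n
  · simp
  · rw [sub_smul]; push_cast; simp [neg_smul, add_smul]
  · simp [sub_smul, mul_smul_comm, pow_add, mul_comm]
  · simp only [Nat.succ_sub_one, Nat.cast_add, Nat.cast_one, mul_smul_comm, sub_smul,
      Nat.add_sub_cancel]
    have h2 : m + 1 + (n + 1) - 1 = (n+1) + m := by omega
    rw [h2, mul_one, ← pow_add, ← pow_add, show m+1+n = (n+1)+m by omega]
end Witt3

section Witt4
variable (K : Type*) [Field K] (p : ℕ) [CharP K p]
local notation "π" => Ideal.Quotient.mk (Ideal.span {(X : Polynomial K) ^ p})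
local notation "t" => Wt K p

lemma Wt_pow_p : t ^ p = 0 := by
  rw [Wt_pow, Ideal.Quotient.eq_zero_iff_mem]
  exact Ideal.subset_span rfl

lemma Wt_pow_eq_zero {a : ℕ} (h : p ≤ a) : t ^ a = 0 := by
  rw [show a = p + (a - p) by omega, pow_add, Wt_pow_p, zero_mul]

lemma WD_zero : WD K p 0 = 0 :=
  Derivation.ext fun x => by rw [WD_apply, zero_mul]; rfl

lemma WD_add (f g : TruncPoly K p) : WD K p (f + g) = WD K p f + WD K p g :=
  add_smul _ _ _

lemma WD_smul (a : K) (f : TruncPoly K p) : WD K p (a • f) = a • WD K p f :=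
  Derivation.ext fun x => by
    rw [WD_apply, Derivation.smul_apply, WD_apply, smul_mul_assoc]

lemma WD_eq (D : Derivation K (TruncPoly K p) (TruncPoly K p)) : WD K p (D t) = D :=
  WD_ext K p (by rw [WD_apply, wder_t, mul_one])

end Witt4

/-- Every invariant symmetric bilinear form on the `p`-dimensional Witt algebra
`W₁(1) = Der(K[x]/(x^p))` over a field of characteristic `p > 3` vanishes. -/
theorem invariant_forms_vanish_on_Witt_algebra
    (K : Type*) [Field K] (p : ℕ) [CharP K p] (hp : 3 < p)
    (ω : Derivation K (TruncPoly K p) (TruncPoly K p) →ₗ[K]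
         Derivation K (TruncPoly K p) (TruncPoly K p) →ₗ[K] K)
    (hsym : ∀ x y : Derivation K (TruncPoly K p) (TruncPoly K p), ω x y = ω y x)
    (hinv : ∀ x y z : Derivation K (TruncPoly K p) (TruncPoly K p),
      ω ⁅z, x⁆ y + ω x ⁅z, y⁆ = 0) :
    ω = 0 := by
  have hprime : p.Prime := by
    have : NeZero p := ⟨by omega⟩
    exact (CharP.char_is_prime_of_pos K p).out
  have h2 : ((2:ℕ) : K) ≠ 0 := by
    intro h
    have hd := (CharP.cast_eq_zero_iff K p 2).mp h
    have := Nat.le_of_dvd (by norm_num) hd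
    omega
  have h3 : ((3:ℕ) : K) ≠ 0 := by
    intro h
    have hd := (CharP.cast_eq_zero_iff K p 3).mp h
    have := Nat.le_of_dvd (by norm_num) hd
    omega
  have h12 : ((12:ℕ) : K) ≠ 0 := by
    intro h
    have hd := (CharP.cast_eq_zero_iff K p 12).mp h
    have hle := Nat.le_of_dvd (by norm_num) hd
    interval_cases p <;> revert hprime hd <;> decide
  set t := Wt K p with ht
  set c : ℕ → ℕ → K := fun a b => ω (WD K p (t ^ a)) (WD K p (t ^ b)) with hc
  -- vanishing for large indices
  have hzero : ∀ a b : ℕ, p ≤ a → c a b = 0 := by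
    intro a b h
    rw [hc]
    simp only [ht, Wt_pow_eq_zero K p h, WD_zero, map_zero, LinearMap.zero_apply]
  -- the invariance relation
  have hrel : ∀ k a b : ℕ,
      ((a:K) - (k:K)) * c (a + k - 1) b + ((b:K) - (k:K)) * c a (b + k - 1) = 0 := by
    intro k a b
    have h := hinv (WD K p (t ^ a)) (WD K p (t ^ b)) (WD K p (t ^ k))
    rw [WD_bracket, WD_bracket, map_smul, LinearMap.smul_apply, (ω _).map_smul] at h
    simpa [smul_eq_mul] using h
  -- symmetry
  have hsymc : ∀ a b : ℕ, c a b = c b a := fun a b => hsym _ _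
  -- the heart: all structure constants vanish
  have hvan : ∀ a b : ℕ, c a b = 0 := by
    intro a b
    by_cases ha : p ≤ a
    · exact hzero a b ha
    by_cases hb : p ≤ b
    · rw [hsymc]; exact hzero b a hb
    push_neg at ha hb
    have h1 := hrel 1 a b
    rw [Nat.add_sub_cancel, Nat.add_sub_cancel] at h1
    have hk : ((a:K) + (b:K) - 2) * c a b = 0 := by push_cast at h1 ⊢; linear_combination h1
    by_cases hs : ((a:K) + (b:K) - 2) = 0
    swap
    · exact (mul_eq_zero.mp hk).resolve_left hs
    -- a + b ≡ 2 mod p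
    have hmod : a + b = 2 ∨ a + b = p + 2 := by
      have : ((a + b : ℕ) : K) = ((2:ℕ) : K) := by push_cast; linear_combination hs
      have hmq := (CharP.natCast_eq_natCast K p).mp this
      have h2p : (a + b) % p = 2 % p := hmq
      rw [Nat.mod_eq_of_lt (show 2 < p by omega)] at h2p
      by_cases hlt : a + b < p
      · left; rwa [Nat.mod_eq_of_lt hlt] at h2p
      · push_neg at hlt
        rw [Nat.mod_eq_sub_mod hlt, Nat.mod_eq_of_lt (by omega)] at h2p
        omega
    rcases hmod with hm | hm
    · -- low case: a + b = 2
      have hc20 : c 2 0 = 0 := by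
        have h := hrel 0 3 0
        norm_num at h
        rcases h with h | h
        · exact absurd (by exact_mod_cast h : ((3:ℕ):K) = 0) h3
        · exact h
      have hc11 : c 1 1 = 0 := by
        have h := hrel 0 2 1
        norm_num [hc20] at h
        rcases h with h | h
        · exact absurd (by exact_mod_cast h : ((2:ℕ):K) = 0) h2
        · exact h
      have ha2 : a ≤ 2 := by omega
      interval_cases a
      · rw [show b = 2 by omega, hsymc]; exact hc20
      · rw [show b = 1 by omega]; exact hc11
      · rw [show b = 0 by omega]; exact hc20
    · -- high case: a + b = p + 2, with 3 ≤ a, b ≤ p - 1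
      have ha3 : 3 ≤ a := by omega
      have hb3 : 3 ≤ b := by omega
      have e1 := hrel 2 a (b-1)
      have e2 := hrel 2 (a+1) (b-2)
      have e3 := hrel 3 a (b-2)
      rw [show a + 2 - 1 = a + 1 by omega, show b - 1 + 2 - 1 = b by omega] at e1
      rw [show a + 1 + 2 - 1 = a + 2 by omega, show b - 2 + 2 - 1 = b - 1 by omega] at e2
      rw [show a + 3 - 1 = a + 2 by omega, show b - 2 + 3 - 1 = b by omega] at e3
      rw [Nat.cast_sub (by omega : 1 ≤ b)] at e1
      rw [Nat.cast_sub (by omega : 2 ≤ b)] at e2 e3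
      have hab : (b : K) = 2 - (a : K) := by linear_combination hs
      rw [hab] at e1 e2 e3
      push_cast at e1 e2 e3
      have hfin : ((12:ℕ):K) * c a b = 0 := by
        push_cast
        linear_combination (((a:K)-3)*((a:K)+2)) * e1 + (((a:K)-3)*((a:K)-2)) * e2
          + (-((a:K)-1)*((a:K)-2)) * e3
      exact (mul_eq_zero.mp hfin).resolve_left h12
  -- from structure constants to all pairs
  have hmono : ∀ (D : Derivation K (TruncPoly K p) (TruncPoly K p)) (g : Polynomial K),
      (∀ n : ℕ, ω D (WD K p (t ^ n)) = 0) →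
      ω D (WD K p (Ideal.Quotient.mk (Ideal.span {(X : Polynomial K) ^ p}) g)) = 0 := by
    intro D g hD
    induction g using Polynomial.induction_on with
    | C a =>
        have : (Ideal.Quotient.mk (Ideal.span {(X : Polynomial K) ^ p}) (C a)) = a • t ^ 0 := by
          rw [pi_C, Algebra.algebraMap_eq_smul_one, pow_zero]
        rw [this, WD_smul, (ω D).map_smul, hD, smul_zero]
    | add f g hf hg => rw [map_add, WD_add, (ω D).map_add, hf, hg, add_zero]
    | monomial n a _ =>
        have : (Ideal.Quotient.mk (Ideal.span {(X : Polynomial K) ^ p}) (C a * X ^ (n+1)))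
            = a • t ^ (n+1) := by
          rw [map_mul, pi_C, ← Algebra.smul_def, ht, ← Wt_pow]
        rw [this, WD_smul, (ω D).map_smul, hD, smul_zero]
  have hws : ∀ (g : TruncPoly K p) (n : ℕ), ω (WD K p (t ^ n)) (WD K p g) = 0 := by
    intro g n
    obtain ⟨Q, rfl⟩ := Ideal.Quotient.mk_surjective g
    exact hmono _ Q (fun m => hvan n m)
  have hfg : ∀ f g : TruncPoly K p, ω (WD K p f) (WD K p g) = 0 := by
    intro f g
    rw [hsym]
    obtain ⟨P, rfl⟩ := Ideal.Quotient.mk_surjective f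
    apply hmono
    intro n
    rw [hsym]
    exact hws g n
  apply LinearMap.ext; intro x; apply LinearMap.ext; intro y
  simp only [LinearMap.zero_apply]
  calc ω x y = ω (WD K p (x t)) (WD K p (y t)) := by rw [WD_eq, WD_eq]
  _ = 0 := hfg _ _
end
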